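/- Let (Ω, 𝒜, P) be a probability space, α ∈ (0, 1], h, h* ∈ ℝ, and let a, a* : Ω → ℝ be measurable functions such that a, a*, (a − h)₊ and (a* − h*)₊ are P-integrable. Let A = {ω ∈ Ω : a(ω) > h}. Then ∫ (h + (1/α)(a(ω) − h)₊) dP(ω) − ∫ (h* + (1/α)(a*(ω) − h*)₊) dP(ω) ≤ (h* − h)·(P(A)/α − 1) + (1/α) ∫_A (a(ω) − a*(ω)) dP(ω). -/

import Mathlib

open MeasureTheory

/-- **Expectation-level CVaR inequality.**
For a probability measure `P`, `α ∈ (0,1]`, levels `h, h*` and integrable losses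
`a, a*` with integrable positive parts, setting `A = {ω | a ω > h}`:
`∫ (h + (1/α)(a - h)₊) dP - ∫ (h* + (1/α)(a* - h*)₊) dP
  ≤ (h* - h)(P(A)/α - 1) + (1/α) ∫_A (a - a*) dP`. -/
theorem stmt15 {Ω : Type*} [MeasurableSpace Ω] (P : Measure Ω) [IsProbabilityMeasure P]
    (α h hstar : ℝ) (hα0 : 0 < α) (hα1 : α ≤ 1)
    (a astar : Ω → ℝ) (ha : Measurable a) (hastar : Measurable astar)
    (hint_a : Integrable a P) (hint_astar : Integrable astar P)
    (hint_pos : Integrable (fun ω => max (a ω - h) 0) P)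
    (hint_poss : Integrable (fun ω => max (astar ω - hstar) 0) P) :
    (∫ ω, (h + (1 / α) * max (a ω - h) 0) ∂P)
        - (∫ ω, (hstar + (1 / α) * max (astar ω - hstar) 0) ∂P)
      ≤ (hstar - h) * ((P {ω | a ω > h}).toReal / α - 1)
        + (1 / α) * ∫ ω in {ω | a ω > h}, (a ω - astar ω) ∂P := by
  set A : Set Ω := {ω | a ω > h} with hAdef
  have hA : MeasurableSet A := measurableSet_lt measurable_const ha
  set p : ℝ := (P A).toReal with hp
  set c : ℝ := 1 / α with hc
  have hc0 : 0 < c := by positivity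
  -- rewrite the two full integrals
  have h1 : (∫ ω, (h + c * max (a ω - h) 0) ∂P)
      = h + c * ∫ ω, max (a ω - h) 0 ∂P := by
    rw [integral_add (integrable_const h) (hint_pos.const_mul c), integral_const,
      integral_const_mul]
    simp
  have h2 : (∫ ω, (hstar + c * max (astar ω - hstar) 0) ∂P)
      = hstar + c * ∫ ω, max (astar ω - hstar) 0 ∂P := by
    rw [integral_add (integrable_const hstar) (hint_poss.const_mul c), integral_const,
      integral_const_mul]
    simp
  -- I = ∫_A (a - h)
  have hI : (∫ ω, max (a ω - h) 0 ∂P) = ∫ ω in A, (a ω - h) ∂P := by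
    rw [← integral_add_compl hA hint_pos]
    have e1 : (∫ ω in A, max (a ω - h) 0 ∂P) = ∫ ω in A, (a ω - h) ∂P := by
      refine setIntegral_congr_fun hA fun ω hω => ?_
      have : h < a ω := hω
      exact max_eq_left (by linarith)
    have e2 : (∫ ω in Aᶜ, max (a ω - h) 0 ∂P) = 0 := by
      have e2' : (∫ ω in Aᶜ, max (a ω - h) 0 ∂P) = ∫ ω in Aᶜ, (0:ℝ) ∂P := by
        refine setIntegral_congr_fun hA.compl fun ω hω => ?_
        have : a ω ≤ h := not_lt.mp hω
        exact max_eq_right (by linarith)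
      simpa using e2'
    rw [e1, e2, add_zero]
  -- J ≥ ∫_A (astar - hstar)
  have hJ : (∫ ω in A, (astar ω - hstar) ∂P) ≤ ∫ ω, max (astar ω - hstar) 0 ∂P := by
    calc (∫ ω in A, (astar ω - hstar) ∂P)
        ≤ ∫ ω in A, max (astar ω - hstar) 0 ∂P := by
          refine setIntegral_mono_on ((hint_astar.sub (integrable_const hstar)).integrableOn)
            hint_poss.integrableOn hA fun ω _ => le_max_left _ _
      _ ≤ ∫ ω, max (astar ω - hstar) 0 ∂P := by
          refine setIntegral_le_integral hint_poss ?_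
          filter_upwards with ω using le_max_right _ _
  -- compute set integrals
  have hPA : (∫ ω in A, (1:ℝ) ∂P) = p := by simp [hp, measure_lt_top, Measure.real]
  have hs1 : (∫ ω in A, (a ω - h) ∂P) = (∫ ω in A, a ω ∂P) - h * p := by
    rw [integral_sub hint_a.integrableOn (integrableOn_const (measure_ne_top P A))]
    simp [hp, mul_comm, Measure.real]
  have hs2 : (∫ ω in A, (astar ω - hstar) ∂P) = (∫ ω in A, astar ω ∂P) - hstar * p := by
    rw [integral_sub hint_astar.integrableOn (integrableOn_const (measure_ne_top P A))]
    simp [hp, mul_comm, Measure.real]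
  have hs3 : (∫ ω in A, (a ω - astar ω) ∂P)
      = (∫ ω in A, a ω ∂P) - ∫ ω in A, astar ω ∂P :=
    integral_sub hint_a.integrableOn hint_astar.integrableOn
  rw [h1, h2, hI, hs3]
  rw [hs1] at *
  rw [hs2] at hJ
  have key : c * ((∫ ω in A, a ω ∂P) - h * p)
      - c * (∫ ω, max (astar ω - hstar) 0 ∂P)
      ≤ c * ((∫ ω in A, a ω ∂P) - h * p) - c * ((∫ ω in A, astar ω ∂P) - hstar * p) := by
    have := mul_le_mul_of_nonneg_left hJ hc0.le
    linarith
  have hpc : p / α = p * c := by rw [hc]; ring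
  rw [hpc]
  nlinarith [key]
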